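/- For every even integer k ≥ 4, there exists a finite simple graph G with exactly 2^{k−1} − 1 vertices such that RED:IC(G) = k. -/

import Mathlib

open scoped symmDiff

variable {V : Type*}

/-- The closed neighborhood of a vertex. -/
def closedNbhd (G : SimpleGraph V) (v : V) : Set V := insert v (G.neighborSet v)

/-- A vertex `v` is at least `k`-dominated by `S`. -/
def kDominated (G : SimpleGraph V) (S : Set V) (k : ℕ) (v : V) : Prop :=
  k ≤ (closedNbhd G v ∩ S).ncard

/-- Two vertices `u` and `v` are `k`-distinguished by `S`. -/
def kDistinguished (G : SimpleGraph V) (S : Set V) (k : ℕ) (u v : V) : Prop :=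
  k ≤ ((closedNbhd G u ∩ S) ∆ (closedNbhd G v ∩ S)).ncard

/-- `S` is an identifying code of `G`. -/
def IsIC (G : SimpleGraph V) (S : Set V) : Prop :=
  (∀ v, kDominated G S 1 v) ∧ ∀ u v, u ≠ v → kDistinguished G S 1 u v

/-- `S` is a redundant identifying code of `G`. -/
def IsRedIC (G : SimpleGraph V) (S : Set V) : Prop :=
  (∀ v, kDominated G S 2 v) ∧ ∀ u v, u ≠ v → kDistinguished G S 2 u v

/-- The minimum cardinality of a redundant identifying code of `G`. -/
noncomputable def redIC (G : SimpleGraph V) : ℕ :=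
  sInf {n | ∃ S : Set V, IsRedIC G S ∧ S.ncard = n}

/-- The degree of a vertex, as the cardinality of its open neighborhood. -/
noncomputable def deg (G : SimpleGraph V) (v : V) : ℕ := (G.neighborSet v).ncard

/-- A leaf is a vertex of degree 1. -/
def IsLeaf (G : SimpleGraph V) (v : V) : Prop := deg G v = 1

/-- A support vertex is a vertex adjacent to a leaf. -/
def IsSupport (G : SimpleGraph V) (v : V) : Prop := ∃ u, G.Adj v u ∧ IsLeaf G u

/-- Two distinct vertices are closed twins if they have the same closed neighborhood. -/
def ClosedTwins (G : SimpleGraph V) (u v : V) : Prop :=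
  u ≠ v ∧ closedNbhd G u = closedNbhd G v

/-! ### Auxiliary material for Statement 8 -/

namespace Stmt8Aux

/-- Lower bound: any graph admitting a RED:IC of size `m` has at most `2^(m-1) - 1` vertices. -/
lemma lower_bound {A : Type*} [Fintype A] [Nonempty A] (G : SimpleGraph A) (S : Set A)
    (h : IsRedIC G S) : Fintype.card A ≤ 2 ^ (S.ncard - 1) - 1 := by
  classical
  obtain ⟨hdom, hdis⟩ := h
  obtain ⟨v0⟩ := ‹Nonempty A›
  have hfin : ∀ v : A, (closedNbhd G v ∩ S).Finite := fun v => Set.toFinite _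
  have hcard : ∀ v : A, ((hfin v).toFinset).card = (closedNbhd G v ∩ S).ncard :=
    fun v => (Set.ncard_eq_toFinset_card _ (hfin v)).symm
  have hne : (closedNbhd G v0 ∩ S).Nonempty :=
    Set.nonempty_of_ncard_ne_zero (by have := hdom v0; unfold kDominated at this; omega)
  obtain ⟨s0, hs0⟩ := hne
  have hs0S : s0 ∈ S := hs0.2
  set Sf : Finset A := (Set.toFinite S).toFinset with hSf
  set F : A → Finset A := fun v => ((hfin v).toFinset).erase s0 with hF
  have hmaps : ∀ v : A, F v ∈ ((Sf.erase s0).powerset).erase ∅ := by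
    intro v
    rw [Finset.mem_erase, Finset.mem_powerset]
    constructor
    · have h2 : 2 ≤ (closedNbhd G v ∩ S).ncard := hdom v
      have hc : ((hfin v).toFinset).card - 1 ≤ (F v).card := Finset.pred_card_le_card_erase
      rw [hcard v] at hc
      intro hemp
      rw [hemp] at hc
      simp at hc
      omega
    · intro x hx
      rw [Finset.mem_erase] at hx ⊢
      refine ⟨hx.1, ?_⟩
      have := hx.2
      rw [Set.Finite.mem_toFinset] at this
      rw [Set.Finite.mem_toFinset]
      exact this.2
  have hinj : ∀ u v : A, F u = F v → u = v := by
    intro u v hFuv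
    by_contra huv
    have h2 := hdis u v huv
    unfold kDistinguished at h2
    have hsub : (closedNbhd G u ∩ S) ∆ (closedNbhd G v ∩ S) ⊆ {s0} := by
      intro x hx
      rw [Set.mem_symmDiff] at hx
      by_contra hxs0
      have hxs0' : x ≠ s0 := hxs0
      have hmem : ∀ w : A, x ∈ F w ↔ x ∈ closedNbhd G w ∩ S := by
        intro w
        rw [hF]
        simp only [Finset.mem_erase, Set.Finite.mem_toFinset]
        exact ⟨fun h => h.2, fun h => ⟨hxs0', h⟩⟩
      rcases hx with ⟨h1, h2'⟩ | ⟨h1, h2'⟩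
      · exact h2' ((hmem v).mp (hFuv ▸ (hmem u).mpr h1))
      · exact h2' ((hmem u).mp (hFuv.symm ▸ (hmem v).mpr h1))
    have : ((closedNbhd G u ∩ S) ∆ (closedNbhd G v ∩ S)).ncard ≤ ({s0} : Set A).ncard :=
      Set.ncard_le_ncard hsub (Set.finite_singleton s0)
    rw [Set.ncard_singleton] at this
    omega
  have hcount : Fintype.card A ≤ ((Sf.erase s0).powerset.erase ∅).card := by
    rw [← Finset.card_univ]
    exact Finset.card_le_card_of_injOn F (fun v _ => hmaps v)
      (fun u _ v _ h => hinj u v h)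
  have hSfcard : Sf.card = S.ncard := by
    rw [hSf, ← Set.ncard_eq_toFinset_card]
  have hs0Sf : s0 ∈ Sf := by rw [hSf, Set.Finite.mem_toFinset]; exact hs0S
  have hfinal : ((Sf.erase s0).powerset.erase ∅).card = 2 ^ (S.ncard - 1) - 1 := by
    rw [Finset.card_erase_of_mem (Finset.empty_mem_powerset _), Finset.card_powerset,
      Finset.card_erase_of_mem hs0Sf, hSfcard]
  omega

/-- Abstract upper bound: given a system of traces, build a graph with a RED:IC of size `k`. -/
lemma upper_abstract {k : ℕ} {W : Type*} (T : W → Finset (Fin k))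
    (hTinj : Function.Injective T) (hT2 : ∀ v, 2 ≤ (T v).card) (hTeven : ∀ v, Even (T v).card)
    (s : Fin k → W) (hsinj : Function.Injective s)
    (hsym : ∀ i j, i ∈ T (s j) → j ∈ T (s i)) (hself : ∀ i, i ∈ T (s i)) :
    ∃ G : SimpleGraph W, IsRedIC G (Set.range s) ∧ (Set.range s).ncard = k := by
  classical
  refine ⟨{ Adj := fun v w => v ≠ w ∧ ∃ i, (w = s i ∧ i ∈ T v) ∨ (v = s i ∧ i ∈ T w)
            symm := ⟨by
              rintro v w ⟨hne, i, h⟩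
              exact ⟨hne.symm, i, h.symm⟩⟩
            loopless := ⟨fun v h => h.1 rfl⟩ }, ?_, ?_⟩
  swap
  · rw [← Set.image_univ, Set.ncard_image_of_injective _ hsinj, Set.ncard_univ,
      Nat.card_eq_fintype_card, Fintype.card_fin]
  set G : SimpleGraph W :=
    { Adj := fun v w => v ≠ w ∧ ∃ i, (w = s i ∧ i ∈ T v) ∨ (v = s i ∧ i ∈ T w)
      symm := ⟨by
        rintro v w ⟨hne, i, h⟩
        exact ⟨hne.symm, i, h.symm⟩⟩
      loopless := ⟨fun v h => h.1 rfl⟩ } with hG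
  show IsRedIC G (Set.range s)
  have trace : ∀ v : W, closedNbhd G v ∩ Set.range s = s '' ↑(T v) := by
    intro v
    ext x
    constructor
    · rintro ⟨hx, j, rfl⟩
      rcases (Set.mem_insert_iff.mp hx) with h | h
      · -- s j = v
        exact ⟨j, by rw [← h]; exact hself j, rfl⟩
      · -- Adj v (s j)
        obtain ⟨hne, i, hi⟩ := h
        rcases hi with ⟨heq, hmem⟩ | ⟨heq, hmem⟩
        · have : j = i := hsinj heq
          exact ⟨j, by rw [this]; exact hmem, rfl⟩
        · -- v = s i, i ∈ T (s j)
          refine ⟨j, ?_, rfl⟩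
          rw [heq]
          exact hsym i j hmem
    · rintro ⟨i, hi, rfl⟩
      refine ⟨?_, ⟨i, rfl⟩⟩
      by_cases h : s i = v
      · rw [h]; exact Set.mem_insert _ _
      · exact Set.mem_insert_iff.mpr (Or.inr ⟨fun he => h he.symm, i, Or.inl ⟨rfl, by exact hi⟩⟩)
  have htrace_ncard : ∀ v : W, (closedNbhd G v ∩ Set.range s).ncard = (T v).card := by
    intro v
    rw [trace v, Set.ncard_image_of_injective _ hsinj, Set.ncard_coe_finset]
  constructor
  · intro v
    unfold kDominated
    rw [htrace_ncard v]
    exact hT2 v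
  · intro u v huv
    unfold kDistinguished
    rw [trace u, trace v, ← Set.image_symmDiff hsinj, ← Finset.coe_symmDiff,
      Set.ncard_image_of_injective _ hsinj, Set.ncard_coe_finset]
    have hTne : T u ≠ T v := fun h => huv (hTinj h)
    have hne : T u ∆ T v ≠ ∅ := by
      intro h
      exact hTne (symmDiff_eq_bot.mp h)
    have hcard0 : (T u ∆ T v).card ≠ 0 := fun h => hne (Finset.card_eq_zero.mp h)
    have hceq : (T u ∆ T v).card = (T u \ T v).card + (T v \ T u).card := by
      rw [symmDiff_def]
      exact Finset.card_union_of_disjoint disjoint_sdiff_sdiff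
    have e1 : (T u \ T v).card + (T u ∩ T v).card = (T u).card :=
      Finset.card_sdiff_add_card_inter _ _
    have e2 : (T v \ T u).card + (T v ∩ T u).card = (T v).card :=
      Finset.card_sdiff_add_card_inter _ _
    have hinter : (T u ∩ T v).card = (T v ∩ T u).card := by rw [Finset.inter_comm]
    obtain ⟨a, ha⟩ := hTeven u
    obtain ⟨b, hb⟩ := hTeven v
    omega

end Stmt8Aux

namespace Stmt8Aux

section Construction

variable {k : ℕ}

/-- The intended trace of the `i`-th code vertex. -/
def avec [NeZero k] (i : Fin k) : Finset (Fin k) := if i = 0 then Finset.univ else {0, i}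

lemma zero_mem_avec [NeZero k] (i : Fin k) : (0 : Fin k) ∈ avec i := by
  unfold avec
  split
  · exact Finset.mem_univ _
  · exact Finset.mem_insert_self _ _

lemma mem_avec_self [NeZero k] (i : Fin k) : i ∈ avec i := by
  unfold avec
  split
  · exact Finset.mem_univ _
  · exact Finset.mem_insert_of_mem (Finset.mem_singleton_self _)

lemma avec_symm [NeZero k] (i j : Fin k) (h : i ∈ avec j) : j ∈ avec i := by
  unfold avec at h ⊢
  by_cases hj : j = 0
  · subst hj
    split
    · exact Finset.mem_univ _
    · exact Finset.mem_insert_self _ _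
  · rw [if_neg hj] at h
    rcases Finset.mem_insert.mp h with h | h
    · subst h
      rw [if_pos rfl]
      exact Finset.mem_univ _
    · rw [Finset.mem_singleton] at h
      subst h
      rw [if_neg hj]
      exact Finset.mem_insert_of_mem (Finset.mem_singleton_self _)

lemma avec_card_pair [NeZero k] {i : Fin k} (hi : i ≠ 0) : ({0, i} : Finset (Fin k)).card = 2 := by
  rw [Finset.card_insert_of_notMem (by simp [Ne.symm hi]), Finset.card_singleton]

lemma avec_card_even [NeZero k] (hke : Even k) (i : Fin k) : Even (avec i).card := by
  unfold avec
  split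
  · rwa [Finset.card_univ, Fintype.card_fin]
  · rw [avec_card_pair (by assumption)]
    exact even_two

lemma avec_card_two [NeZero k] (h4 : 4 ≤ k) (i : Fin k) : 2 ≤ (avec i).card := by
  unfold avec
  split
  · rw [Finset.card_univ, Fintype.card_fin]; omega
  · rw [avec_card_pair (by assumption)]

lemma avec_inj [NeZero k] (h4 : 4 ≤ k) : Function.Injective (avec (k := k)) := by
  intro i j h
  unfold avec at h
  by_cases hi : i = 0 <;> by_cases hj : j = 0
  · rw [hi, hj]
  · rw [if_pos hi, if_neg hj] at h
    have := congrArg Finset.card h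
    rw [Finset.card_univ, Fintype.card_fin, avec_card_pair hj] at this
    omega
  · rw [if_neg hi, if_pos hj] at h
    have := congrArg Finset.card h
    rw [Finset.card_univ, Fintype.card_fin, avec_card_pair hi] at this
    omega
  · rw [if_neg hi, if_neg hj] at h
    have : i ∈ ({0, j} : Finset (Fin k)) := h ▸ Finset.mem_insert_of_mem (Finset.mem_singleton_self i)
    rcases Finset.mem_insert.mp this with h' | h'
    · exact absurd h' hi
    · exact Finset.mem_singleton.mp h'

/-- Embedding of `Fin (k-1)` into `Fin k`. -/
def castEmb (hk : 1 ≤ k) : Fin (k - 1) ↪ Fin k :=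
  ⟨fun i => ⟨i.1, by omega⟩, by
    intro a b h
    apply Fin.ext
    simpa [Fin.ext_iff] using h⟩

/-- The last element of `Fin k`. -/
def lastV (hk : 1 ≤ k) : Fin k := ⟨k - 1, by omega⟩

lemma lastV_not_mem_map (hk : 1 ≤ k) (B : Finset (Fin (k - 1))) :
    lastV hk ∉ B.map (castEmb hk) := by
  intro h
  obtain ⟨i, _, hi⟩ := Finset.mem_map.mp h
  have : i.1 = k - 1 := congrArg Fin.val hi
  have := i.2
  omega

/-- Encode a nonempty subset of `Fin (k-1)` as an even-size subset of `Fin k`. -/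
def enc (hk : 1 ≤ k) (B : Finset (Fin (k - 1))) : Finset (Fin k) :=
  if Even B.card then B.map (castEmb hk) else insert (lastV hk) (B.map (castEmb hk))

lemma enc_card (hk : 1 ≤ k) (B : Finset (Fin (k - 1))) :
    (enc hk B).card = B.card ∨ (enc hk B).card = B.card + 1 := by
  unfold enc
  split
  · left; exact Finset.card_map _
  · right
    rw [Finset.card_insert_of_notMem (lastV_not_mem_map hk B), Finset.card_map]

lemma enc_card_even (hk : 1 ≤ k) (B : Finset (Fin (k - 1))) : Even (enc hk B).card := by
  unfold enc
  split
  · rwa [Finset.card_map]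
  · rw [Finset.card_insert_of_notMem (lastV_not_mem_map hk B), Finset.card_map]
    rename_i h
    rw [Nat.even_add_one]
    exact h

lemma enc_card_two (hk : 1 ≤ k) {B : Finset (Fin (k - 1))} (hB : B.Nonempty) :
    2 ≤ (enc hk B).card := by
  have h1 : 1 ≤ B.card := Finset.card_pos.mpr hB
  have he := enc_card_even hk B
  obtain ⟨m, hm⟩ := he
  rcases enc_card hk B with h | h <;> omega

lemma mem_enc (hk : 1 ≤ k) (B : Finset (Fin (k - 1))) (i : Fin (k - 1)) :
    castEmb hk i ∈ enc hk B ↔ i ∈ B := by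
  have hne : castEmb hk i ≠ lastV hk := by
    intro h
    have : i.1 = k - 1 := congrArg Fin.val h
    have := i.2
    omega
  unfold enc
  split
  · exact Finset.mem_map' _
  · rw [Finset.mem_insert]
    constructor
    · rintro (h | h)
      · exact absurd h hne
      · exact (Finset.mem_map' _).mp h
    · intro h
      exact Or.inr ((Finset.mem_map' _).mpr h)

lemma enc_inj (hk : 1 ≤ k) : Function.Injective (enc hk) := by
  intro B1 B2 h
  ext i
  rw [← mem_enc hk B1 i, h, mem_enc]

lemma exists_enc_eq_avec (h4 : 4 ≤ k) (hke : Even k) [NeZero k] (i : Fin k) :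
    ∃ B : Finset (Fin (k - 1)), B.Nonempty ∧ enc (by omega) B = avec i := by
  have hk : 1 ≤ k := by omega
  have hk1 : 1 ≤ k - 1 := by omega
  by_cases hi : i = 0
  · -- B = univ
    refine ⟨Finset.univ, ?_, ?_⟩
    · exact ⟨⟨0, by omega⟩, Finset.mem_univ _⟩
    · have hcard : (Finset.univ : Finset (Fin (k - 1))).card = k - 1 := by
        rw [Finset.card_univ, Fintype.card_fin]
      have hodd : ¬ Even (Finset.univ : Finset (Fin (k - 1))).card := by
        rw [hcard]
        obtain ⟨m, hm⟩ := hke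
        intro ⟨p, hp⟩
        omega
      unfold enc
      rw [if_neg hodd, hi]
      unfold avec
      rw [if_pos rfl]
      ext j
      constructor
      · intro _
        exact Finset.mem_univ _
      · intro _
        by_cases hj : j.1 = k - 1
        · exact Finset.mem_insert.mpr (Or.inl (Fin.ext hj))
        · exact Finset.mem_insert.mpr (Or.inr (Finset.mem_map.mpr
            ⟨⟨j.1, by have := j.2; omega⟩, Finset.mem_univ _, Fin.ext rfl⟩))
  · by_cases hilast : i.1 = k - 1
    · -- B = {0}
      refine ⟨{⟨0, by omega⟩}, Finset.singleton_nonempty _, ?_⟩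
      have hodd : ¬ Even ({(⟨0, by omega⟩ : Fin (k - 1))} : Finset (Fin (k - 1))).card := by
        rw [Finset.card_singleton]
        simp
      unfold enc
      rw [if_neg hodd]
      unfold avec
      rw [if_neg hi]
      rw [Finset.map_singleton]
      have h1 : (castEmb hk) ⟨0, by omega⟩ = (0 : Fin k) := by
        apply Fin.ext
        show (0 : ℕ) = _
        simp
      have h2 : lastV hk = i := by
        apply Fin.ext
        simp [lastV, hilast]
      rw [h1, h2]
      exact Finset.pair_comm i 0
    · -- B = {0, i'}
      have hival : i.1 ≠ 0 := fun h => hi (Fin.ext h)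
      refine ⟨{⟨0, by omega⟩, ⟨i.1, by have := i.2; omega⟩}, ?_, ?_⟩
      · exact ⟨_, Finset.mem_insert_self _ _⟩
      · have hne01 : (⟨0, by omega⟩ : Fin (k - 1)) ≠ ⟨i.1, by have := i.2; omega⟩ := by
          intro h
          have : (0 : ℕ) = i.1 := congrArg Fin.val h
          omega
        have heven : Even ({(⟨0, by omega⟩ : Fin (k-1)), ⟨i.1, by have := i.2; omega⟩} : Finset (Fin (k - 1))).card := by
          rw [Finset.card_insert_of_notMem (by simp [hne01]), Finset.card_singleton]
          exact even_two
        unfold enc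
        rw [if_pos heven]
        unfold avec
        rw [if_neg hi]
        rw [Finset.map_insert, Finset.map_singleton]
        have h1 : (castEmb hk) ⟨0, by omega⟩ = (0 : Fin k) := by
          apply Fin.ext
          show (0 : ℕ) = _
          simp
        have h2 : (castEmb hk) ⟨i.1, by have := i.2; omega⟩ = i := by
          apply Fin.ext
          rfl
        rw [h1, h2]

end Construction

/-- Transport of RED:ICs across an equivalence. -/
lemma transport {A B : Type*} (e : A ≃ B) (G : SimpleGraph A) (S : Set A)
    (h : IsRedIC G S) : IsRedIC (G.comap ⇑e.symm) (e '' S) := by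
  have htr : ∀ x : B, closedNbhd (G.comap ⇑e.symm) x ∩ (e '' S)
      = e '' (closedNbhd G (e.symm x) ∩ S) := by
    intro x
    ext y
    simp only [Set.mem_inter_iff, Set.mem_image]
    constructor
    · rintro ⟨hy, a, haS, rfl⟩
      refine ⟨a, ⟨?_, haS⟩, rfl⟩
      rcases Set.mem_insert_iff.mp hy with h' | h'
      · rw [← h', Equiv.symm_apply_apply]
        exact Set.mem_insert _ _
      · have : G.Adj (e.symm x) (e.symm (e a)) := h'
        rw [Equiv.symm_apply_apply] at this
        exact Set.mem_insert_iff.mpr (Or.inr this)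
    · rintro ⟨a, ⟨ha, haS⟩, rfl⟩
      refine ⟨?_, a, haS, rfl⟩
      rcases Set.mem_insert_iff.mp ha with h' | h'
      · rw [h']
        rw [Equiv.apply_symm_apply]
        exact Set.mem_insert _ _
      · refine Set.mem_insert_iff.mpr (Or.inr ?_)
        show G.Adj (e.symm x) (e.symm (e a))
        rwa [Equiv.symm_apply_apply]
  obtain ⟨hdom, hdis⟩ := h
  constructor
  · intro x
    unfold kDominated
    rw [htr x, Set.ncard_image_of_injective _ e.injective]
    exact hdom (e.symm x)
  · intro u v huv
    unfold kDistinguished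
    rw [htr u, htr v, ← Set.image_symmDiff e.injective,
      Set.ncard_image_of_injective _ e.injective]
    exact hdis _ _ (fun h' => huv (by rw [← Equiv.apply_symm_apply e u, h', Equiv.apply_symm_apply]))

lemma card_W (h4 : 4 ≤ k) :
    Fintype.card {B : Finset (Fin (k - 1)) // B.Nonempty} = 2 ^ (k - 1) - 1 := by
  classical
  have h1 : Fintype.card {B : Finset (Fin (k - 1)) // B.Nonempty}
      = Fintype.card {B : Finset (Fin (k - 1)) // ¬ (B = ∅)} := by
    apply Fintype.card_congr
    exact Equiv.subtypeEquivRight (fun B => Finset.nonempty_iff_ne_empty)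
  rw [h1, Fintype.card_subtype_compl, Fintype.card_subtype_eq, Fintype.card_finset,
    Fintype.card_fin]

end Stmt8Aux

theorem stmt_8 (k : ℕ) (hk : Even k) (h4 : 4 ≤ k) :
    ∃ G : SimpleGraph (Fin (2 ^ (k - 1) - 1)), redIC G = k := by
  classical
  haveI : NeZero k := ⟨by omega⟩
  -- the vertex type
  set W := {B : Finset (Fin (k - 1)) // B.Nonempty} with hW
  have hk1 : (1 : ℕ) ≤ k := by omega
  -- trace function
  set T : W → Finset (Fin k) := fun B => Stmt8Aux.enc hk1 B.1 with hT
  have hTinj : Function.Injective T := by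
    intro u v h
    exact Subtype.ext (Stmt8Aux.enc_inj hk1 h)
  have hT2 : ∀ v : W, 2 ≤ (T v).card := fun v => Stmt8Aux.enc_card_two hk1 v.2
  have hTeven : ∀ v : W, Even (T v).card := fun v => Stmt8Aux.enc_card_even hk1 v.1
  -- code vertices
  have hex : ∀ i : Fin k, ∃ B : W, T B = Stmt8Aux.avec i := by
    intro i
    obtain ⟨B, hBne, hBe⟩ := Stmt8Aux.exists_enc_eq_avec h4 hk i
    exact ⟨⟨B, hBne⟩, hBe⟩
  choose s hs using hex
  have hsinj : Function.Injective s := by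
    intro i j h
    apply Stmt8Aux.avec_inj h4
    rw [← hs i, ← hs j, h]
  have hsym : ∀ i j, i ∈ T (s j) → j ∈ T (s i) := by
    intro i j h
    rw [hs j] at h
    rw [hs i]
    exact Stmt8Aux.avec_symm i j h
  have hself : ∀ i, i ∈ T (s i) := by
    intro i
    rw [hs i]
    exact Stmt8Aux.mem_avec_self i
  obtain ⟨G0, hG0, hScard⟩ := Stmt8Aux.upper_abstract T hTinj hT2 hTeven s hsinj hsym hself
  -- transport to Fin (2^(k-1)-1)
  have hcard : Fintype.card W = 2 ^ (k - 1) - 1 := Stmt8Aux.card_W h4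
  set e : W ≃ Fin (2 ^ (k - 1) - 1) := Fintype.equivFinOfCardEq hcard with he
  refine ⟨G0.comap ⇑e.symm, ?_⟩
  have hNpos : 0 < 2 ^ (k - 1) - 1 := by
    have : (2 : ℕ) ^ 3 ≤ 2 ^ (k - 1) := Nat.pow_le_pow_right (by norm_num) (by omega)
    omega
  haveI : Nonempty (Fin (2 ^ (k - 1) - 1)) := ⟨⟨0, hNpos⟩⟩
  have hmem : (k : ℕ) ∈ {n | ∃ S : Set (Fin (2 ^ (k - 1) - 1)),
      IsRedIC (G0.comap ⇑e.symm) S ∧ S.ncard = n} := by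
    refine ⟨e '' Set.range s, Stmt8Aux.transport e G0 _ hG0, ?_⟩
    rw [Set.ncard_image_of_injective _ e.injective, hScard]
  apply le_antisymm
  · exact Nat.sInf_le hmem
  · apply le_csInf ⟨k, hmem⟩
    rintro n ⟨S, hS, rfl⟩
    have hlb := Stmt8Aux.lower_bound (G0.comap ⇑e.symm) S hS
    rw [Fintype.card_fin] at hlb
    have hp1 : (1 : ℕ) ≤ 2 ^ (k - 1) := Nat.one_le_two_pow
    have hp2 : (1 : ℕ) ≤ 2 ^ (S.ncard - 1) := Nat.one_le_two_pow
    have hpow : 2 ^ (k - 1) ≤ 2 ^ (S.ncard - 1) := by omega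
    have := (Nat.pow_le_pow_iff_right (by norm_num : (1:ℕ) < 2)).mp hpow
    omega
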